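/- Let f : ℝⁿ → ℝⁿ, G : ℝⁿ → ℝ^{n×m}, B : ℝⁿ → ℝ^{n×l}, Σ_ε ∈ ℝ^{l×l}, R ∈ ℝ^{m×m} positive definite, λ > 0, and suppose λ G(x) R⁻¹ G(x)ᵀ = B(x) Σ_ε B(x)ᵀ =: Σ(x) for all x. Let Ψ : ℝⁿ → ℝ be C² and positive, V = −λ log Ψ, and u = −R⁻¹ Gᵀ ∇V. Then the generator L(V) := (∇V)ᵀ(f + G u) + ½ Tr((∇²V) B Σ_ε Bᵀ) equals −(λ/Ψ)(∇Ψ)ᵀ f − (λ/(2Ψ²)) (∇Ψ)ᵀ Σ ∇Ψ − (λ/(2Ψ)) Tr((∇²Ψ) Σ). -/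

import Mathlib

open Real Matrix

/-- Gradient of a scalar function on `ℝⁿ`. -/
noncomputable def grad (n : ℕ) (V : (Fin n → ℝ) → ℝ) (x : Fin n → ℝ) : Fin n → ℝ :=
  fun i => fderiv ℝ V x (Pi.single i 1)

/-- Hessian matrix of a scalar function on `ℝⁿ`. -/
noncomputable def hess (n : ℕ) (V : (Fin n → ℝ) → ℝ) (x : Fin n → ℝ) :
    Matrix (Fin n) (Fin n) ℝ :=
  Matrix.of fun i j => fderiv ℝ (fun y => fderiv ℝ V y (Pi.single j 1)) x (Pi.single i 1)

/-- Under the structural noise assumption `λ G R⁻¹ Gᵀ = B Σ_ε Bᵀ = Σ`, with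
`V = −λ log Ψ` and `u = −R⁻¹ Gᵀ ∇V`, the generator
`L(V) = (∇V)ᵀ(f + Gu) + ½ Tr((∇²V) B Σ_ε Bᵀ)` equals
`−(λ/Ψ)(∇Ψ)ᵀ f − (λ/(2Ψ²))(∇Ψ)ᵀ Σ ∇Ψ − (λ/(2Ψ)) Tr((∇²Ψ) Σ)`. -/
theorem generator_in_terms_of_desirability (n m l : ℕ) (lam : ℝ) (hlam : 0 < lam)
    (f : (Fin n → ℝ) → (Fin n → ℝ))
    (G : (Fin n → ℝ) → Matrix (Fin n) (Fin m) ℝ)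
    (B : (Fin n → ℝ) → Matrix (Fin n) (Fin l) ℝ)
    (Sige : Matrix (Fin l) (Fin l) ℝ)
    (R : Matrix (Fin m) (Fin m) ℝ) (hR : R.PosDef)
    (Sig : (Fin n → ℝ) → Matrix (Fin n) (Fin n) ℝ)
    (hstruct : ∀ x, lam • (G x * R⁻¹ * (G x)ᵀ) = Sig x)
    (hSig : ∀ x, B x * Sige * (B x)ᵀ = Sig x)
    (Ψ : (Fin n → ℝ) → ℝ) (hΨ : ContDiff ℝ 2 Ψ) (hΨpos : ∀ x, 0 < Ψ x)
    (V : (Fin n → ℝ) → ℝ) (hV : ∀ x, V x = -lam * Real.log (Ψ x))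
    (u : (Fin n → ℝ) → (Fin m → ℝ))
    (hu : ∀ x, u x = -((R⁻¹ * (G x)ᵀ).mulVec (grad n V x)))
    (L : (Fin n → ℝ) → ℝ)
    (hL : ∀ x, L x = dotProduct (grad n V x) (f x + (G x).mulVec (u x))
        + (1 / 2) * (hess n V x * (B x * Sige * (B x)ᵀ)).trace) :
    ∀ x, L x = -(lam / Ψ x) * dotProduct (grad n Ψ x) (f x)
        - (lam / (2 * (Ψ x) ^ 2)) * dotProduct (grad n Ψ x) ((Sig x).mulVec (grad n Ψ x))
        - (lam / (2 * Ψ x)) * (hess n Ψ x * Sig x).trace := by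
  
  have hVfun : V = fun y => -lam * Real.log (Ψ y) := funext hV
  subst hVfun
  have hΨd : Differentiable ℝ Ψ := hΨ.differentiable (by norm_num)
  have hF : Differentiable ℝ (fderiv ℝ Ψ) :=
    (hΨ.fderiv_right (m := 1) (by norm_num)).differentiable one_ne_zero
  have hg : ∀ v, Differentiable ℝ (fun y => fderiv ℝ Ψ y v) :=
    fun v => hF.clm_apply (differentiable_const v)
  -- derivative of V
  have hlog : ∀ y, HasFDerivAt (fun z => -lam * Real.log (Ψ z))
      ((-lam * (Ψ y)⁻¹) • fderiv ℝ Ψ y) y := by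
    intro y
    have h2 := ((hΨd y).hasFDerivAt.log (ne_of_gt (hΨpos y))).const_mul (-lam)
    rwa [smul_smul] at h2
  have hgradV : ∀ x, grad n (fun z => -lam * Real.log (Ψ z)) x
      = (-lam * (Ψ x)⁻¹) • grad n Ψ x := by
    intro x
    funext j
    simp only [grad, Pi.smul_apply, smul_eq_mul]
    rw [(hlog x).fderiv]
    simp [mul_assoc]
  -- Hessian of V
  have hhessV : ∀ x, hess n (fun z => -lam * Real.log (Ψ z)) x
      = (lam * ((Ψ x) ^ 2)⁻¹) • vecMulVec (grad n Ψ x) (grad n Ψ x)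
        - (lam * (Ψ x)⁻¹) • hess n Ψ x := by
    intro x
    have key : (fun y => fderiv ℝ (fun z => -lam * Real.log (Ψ z)) y)
        = fun y => (-lam * (Ψ y)⁻¹) • fderiv ℝ Ψ y := funext fun y => (hlog y).fderiv
    funext i j
    have hfun : (fun y => fderiv ℝ (fun z => -lam * Real.log (Ψ z)) y (Pi.single j 1))
        = fun y => -lam * ((Ψ y)⁻¹ * fderiv ℝ Ψ y (Pi.single j 1)) := by
      funext y
      rw [(hlog y).fderiv]
      simp [mul_assoc]
    have hinv : HasFDerivAt (fun y => (Ψ y)⁻¹)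
        ((-(Ψ x ^ 2)⁻¹) • fderiv ℝ Ψ x) x :=
      (hasDerivAt_inv (ne_of_gt (hΨpos x))).comp_hasFDerivAt x (hΨd x).hasFDerivAt
    have hgj : HasFDerivAt (fun y => fderiv ℝ Ψ y (Pi.single j 1))
        (fderiv ℝ (fun y => fderiv ℝ Ψ y (Pi.single j 1)) x) x :=
      ((hg (Pi.single j 1)) x).hasFDerivAt
    have hprod : HasFDerivAt (fun y => -lam * ((Ψ y)⁻¹ * fderiv ℝ Ψ y (Pi.single j 1))) _ x :=
      (hinv.mul hgj).const_mul (-lam)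
    have hd : hess n (fun z => -lam * Real.log (Ψ z)) x i j
        = (-lam) • ((Ψ x)⁻¹ • fderiv ℝ (fun y => fderiv ℝ Ψ y (Pi.single j 1)) x
            + fderiv ℝ Ψ x (Pi.single j 1) • ((-(Ψ x ^ 2)⁻¹) • fderiv ℝ Ψ x))
          (Pi.single i 1) := by
      simp only [hess, Matrix.of_apply]
      rw [hfun, hprod.fderiv]
      simp
      ring
    rw [hd]
    simp only [ContinuousLinearMap.add_apply, ContinuousLinearMap.coe_smul',
      Pi.smul_apply, smul_eq_mul]
    simp only [Matrix.sub_apply, Matrix.smul_apply, Matrix.vecMulVec_apply, hess,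
      Matrix.of_apply, grad, smul_eq_mul]
    ring
  -- now the algebra
  intro x
  rw [hL x, hSig x, hgradV x, hhessV x]
  have hp : Ψ x ≠ 0 := ne_of_gt (hΨpos x)
  have hl : lam ≠ 0 := ne_of_gt hlam
  have hGRG : G x * R⁻¹ * (G x)ᵀ = lam⁻¹ • Sig x := by
    rw [← hstruct x, smul_smul, inv_mul_cancel₀ hl, one_smul]
  have hux : (G x).mulVec (u x)
      = -((lam⁻¹ • Sig x).mulVec ((-lam * (Ψ x)⁻¹) • grad n Ψ x)) := by
    rw [hu x, hgradV x, Matrix.mulVec_neg, Matrix.mulVec_mulVec, ← Matrix.mul_assoc, hGRG]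
  rw [hux]
  have htr : (vecMulVec (grad n Ψ x) (grad n Ψ x) * Sig x).trace
      = dotProduct (grad n Ψ x) ((Sig x).mulVec (grad n Ψ x)) := by
    simp only [Matrix.trace, Matrix.diag, Matrix.mul_apply, Matrix.vecMulVec_apply,
      dotProduct, Matrix.mulVec, Finset.mul_sum]
    rw [Finset.sum_comm]
    apply Finset.sum_congr rfl
    intro i _
    apply Finset.sum_congr rfl
    intro j _
    ring
  rw [Matrix.sub_mul, Matrix.trace_sub, Matrix.smul_mul, Matrix.smul_mul,
    Matrix.trace_smul, Matrix.trace_smul, htr]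
  simp only [Matrix.smul_mulVec, Matrix.mulVec_smul, smul_dotProduct,
    dotProduct_smul, dotProduct_neg, dotProduct_add, smul_eq_mul]
  field_simp
  ring
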